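/- Let Z be a ring, (Z', h, π₀) a first order deformation of Z, and r ≥ 1. Let M₀ be a left Z-module and let M = M₀^r be the column module over M_r(Z). If M' is a first order deformation of M over the induced first order deformation (M_r(Z'), h·1, M_r(π₀)) of M_r(Z), then there exists a left Z'-module M₀' which is a first order Z'-deformation of M₀ and an isomorphism of M_r(Z')-modules M' ≅ (M₀')^r compatible with the given identifications modulo h. -/

import Mathlib

universe u v w x

/-- `(A', h, π)` is a first order deformation of `A`: `h` is a central element of `A'`,
`π : A' → A` is a surjective ring homomorphism with kernel `hA'`, and the annihilator
`{x ∈ A' : h·x = 0}` equals `hA'`. -/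
def IsFirstOrderDeformation {A' A : Type*} [Ring A'] [Ring A] (h : A') (π : A' →+* A) : Prop :=
  (∀ x : A', h * x = x * h) ∧
  Function.Surjective π ∧
  (∀ x : A', π x = 0 ↔ ∃ y : A', x = h * y) ∧
  (∀ x : A', h * x = 0 ↔ ∃ y : A', x = h * y)

/-- Given a first order deformation `(A', h, π)` of `A`, an `A`-module `M` and an
`A'`-module `M'`, the additive map `q : M' → M` exhibits `M'` as a first order
`A'`-deformation of `M`: `q` is surjective and `π`-equivariant, its kernel is `h·M'`
(so `M'/hM' ≅ M`), and the annihilator of `h` in `M'` is `h·M'`. -/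
def IsModuleDeformation {A' A : Type*} [Ring A'] [Ring A] (h : A') (π : A' →+* A)
    {M' M : Type*} [AddCommGroup M'] [Module A' M'] [AddCommGroup M] [Module A M]
    (q : M' →+ M) : Prop :=
  Function.Surjective q ∧
  (∀ (a : A') (x : M'), q (a • x) = π a • q x) ∧
  (∀ x : M', q x = 0 ↔ ∃ y : M', x = h • y) ∧
  (∀ x : M', h • x = 0 ↔ ∃ y : M', x = h • y)

section ColumnModule

variable {R M : Type*} [Ring R] [AddCommGroup M] [Module R M] {r : ℕ}

/-- The action of a square matrix on a column vector with entries in a module. -/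
instance matrixColSMul : SMul (Matrix (Fin r) (Fin r) R) (Fin r → M) :=
  ⟨fun A v i => ∑ j, A i j • v j⟩

theorem matrixCol_smul_def (A : Matrix (Fin r) (Fin r) R) (v : Fin r → M) (i : Fin r) :
    (A • v) i = ∑ j, A i j • v j := rfl

/-- The column module `M^r` over the matrix ring `M_r(R)`. -/
instance matrixColModule : Module (Matrix (Fin r) (Fin r) R) (Fin r → M) where
  one_smul v := funext fun i => by
    simp [matrixCol_smul_def, Matrix.one_apply, ite_smul]
  mul_smul A B v := funext fun i => by
    simp only [matrixCol_smul_def, Matrix.mul_apply, Finset.sum_smul, Finset.smul_sum, mul_smul]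
    exact Finset.sum_comm
  smul_zero A := funext fun i => by simp [matrixCol_smul_def]
  smul_add A u v := funext fun i => by simp [matrixCol_smul_def, Finset.sum_add_distrib]
  add_smul A B v := funext fun i => by
    simp [matrixCol_smul_def, Matrix.add_apply, add_smul, Finset.sum_add_distrib]
  zero_smul v := funext fun i => by simp [matrixCol_smul_def]

end ColumnModule

theorem stdBasis_col_smul {R M : Type*} [Ring R] [AddCommGroup M] [Module R M] {r : ℕ}
    (i j : Fin r) (c : R) (w : Fin r → M) (k : Fin r) :
    (Matrix.single i j c • w) k = if i = k then c • w j else 0 := by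
  rw [matrixCol_smul_def]
  rcases eq_or_ne i k with rfl | hik
  · rw [Finset.sum_eq_single j, if_pos rfl]
    · simp [Matrix.single]
    · intro l _ hl; simp [Matrix.single, Ne.symm hl]
    · simp
  · rw [if_neg hik, Finset.sum_eq_zero]
    intro l _
    simp [Matrix.single, hik]

namespace ColumnSplit

open Matrix

variable {Z' : Type u} [Ring Z'] {r : ℕ}
variable {M' : Type x} [AddCommGroup M'] [Module (Matrix (Fin r) (Fin r) Z') M']

/-- Sum of diagonal matrix units is the identity. -/
theorem sum_stdBasis_diag :
    (∑ i : Fin r, Matrix.single i i (1 : Z')) = 1 := by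
  ext a b
  simp only [Matrix.sum_apply, Matrix.single, Matrix.of_apply, Matrix.one_apply]
  rcases eq_or_ne a b with rfl | hab
  · simp
  · rw [if_neg hab, Finset.sum_eq_zero]
    intro c _
    rw [if_neg]
    rintro ⟨rfl, rfl⟩
    exact hab rfl

/-- Row extraction: `E_{z0,i} * A = ∑ j, A i j · E_{z0,j}`. -/
theorem stdBasis_mul_eq_sum (z0 i : Fin r) (A : Matrix (Fin r) (Fin r) Z') :
    Matrix.single z0 i (1 : Z') * A
      = ∑ j, Matrix.single z0 j (A i j) := by
  ext a b
  rw [Matrix.sum_apply]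
  rcases eq_or_ne a z0 with rfl | hza
  · rw [Matrix.single_mul_apply_same, one_mul]
    rw [Finset.sum_eq_single b]
    · simp [Matrix.single]
    · intro c _ hc; simp [Matrix.single, hc]
    · simp
  · rw [Matrix.single_mul_apply_of_ne (h := hza)]
    rw [Finset.sum_eq_zero]
    intro c _
    simp [Matrix.single, Ne.symm hza]

/-- Multiplying by a central-scalar matrix on the right. -/
theorem mul_hsmul_one (h : Z') (hc : ∀ x : Z', h * x = x * h)
    (A : Matrix (Fin r) (Fin r) Z') :
    A * (h • (1 : Matrix (Fin r) (Fin r) Z')) = h • A := by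
  ext a b
  simp only [Matrix.mul_apply, Matrix.smul_apply, Matrix.one_apply, smul_eq_mul, mul_ite,
    mul_one, mul_zero]
  rw [Finset.sum_eq_single b]
  · simp [← hc (A a b)]
  · intro c _ hc'; simp [hc']
  · simp

theorem hsmul_one_mul (h : Z') (A : Matrix (Fin r) (Fin r) Z') :
    (h • (1 : Matrix (Fin r) (Fin r) Z')) * A = h • A := by
  rw [Matrix.smul_mul, one_mul]

/-- The corner `E_{z0,z0} · M'` of a module over the matrix ring, as an additive subgroup. -/
def corner (z0 : Fin r) : AddSubgroup M' where
  carrier := {v | (Matrix.single z0 z0 (1 : Z')) • v = v}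
  add_mem' := by
    intro a b ha hb
    simp only [Set.mem_setOf_eq, smul_add] at *
    rw [ha, hb]
  zero_mem' := smul_zero _
  neg_mem' := by
    intro a ha
    simp only [Set.mem_setOf_eq, smul_neg] at *
    rw [ha]

theorem mem_corner_iff (z0 : Fin r) (v : M') :
    v ∈ corner (Z' := Z') z0 ↔ (Matrix.single z0 z0 (1 : Z')) • v = v := Iff.rfl

instance cornerSMul (z0 : Fin r) : SMul Z' (corner (Z' := Z') (M' := M') z0) :=
  ⟨fun z v => ⟨Matrix.single z0 z0 z • (v : M'), by
    rw [mem_corner_iff, ← mul_smul, Matrix.single_mul_single_same, one_mul]⟩⟩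

theorem corner_smul_coe (z0 : Fin r) (z : Z') (v : corner (Z' := Z') (M' := M') z0) :
    ((z • v : corner (Z' := Z') (M' := M') z0) : M')
      = Matrix.single z0 z0 z • (v : M') := rfl

instance cornerModule (z0 : Fin r) : Module Z' (corner (Z' := Z') (M' := M') z0) where
  one_smul v := Subtype.ext <| by rw [corner_smul_coe]; exact v.2
  mul_smul z w v := Subtype.ext <| by
    simp only [corner_smul_coe, ← mul_smul, Matrix.single_mul_single_same]
  smul_zero z := Subtype.ext <| by
    simp only [corner_smul_coe, AddSubgroup.coe_zero, smul_zero]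
  smul_add z u v := Subtype.ext <| by
    simp only [corner_smul_coe, AddSubgroup.coe_add, smul_add]
  add_smul z w v := Subtype.ext <| by
    simp only [corner_smul_coe, AddSubgroup.coe_add, Matrix.single_add, add_smul]
  zero_smul v := Subtype.ext <| by
    simp only [corner_smul_coe, Matrix.single_zero, zero_smul, AddSubgroup.coe_zero]

theorem corner_coe_sum (z0 : Fin r) {ι : Type*} (s : Finset ι)
    (f : ι → corner (Z' := Z') (M' := M') z0) :
    ((∑ i ∈ s, f i : corner (Z' := Z') (M' := M') z0) : M') = ∑ i ∈ s, ((f i : M')) :=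
  map_sum ((corner (Z' := Z') (M' := M') z0).subtype) f s

theorem col_smul_corner_coe (z0 : Fin r) (A : Matrix (Fin r) (Fin r) Z')
    (v : Fin r → corner (Z' := Z') (M' := M') z0) (i : Fin r) :
    (((A • v) i : corner (Z' := Z') (M' := M') z0) : M')
      = ∑ j, Matrix.single z0 z0 (A i j) • ((v j : M')) := by
  rw [matrixCol_smul_def, corner_coe_sum]
  exact Finset.sum_congr rfl fun j _ => corner_smul_coe z0 _ _

/-- The components of the splitting isomorphism. -/
def toCol (z0 : Fin r) (x : M') : Fin r → corner (Z' := Z') (M' := M') z0 :=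
  fun i => ⟨Matrix.single z0 i (1 : Z') • x, by
    rw [mem_corner_iff, ← mul_smul, Matrix.single_mul_single_same, one_mul]⟩

theorem toCol_coe (z0 : Fin r) (x : M') (i : Fin r) :
    ((toCol z0 x i : corner (Z' := Z') (M' := M') z0) : M')
      = Matrix.single z0 i (1 : Z') • x := rfl

/-- The inverse of the splitting isomorphism. -/
def ofCol (z0 : Fin r) (v : Fin r → corner (Z' := Z') (M' := M') z0) : M' :=
  ∑ i, Matrix.single i z0 (1 : Z') • ((v i : M'))

theorem toCol_add (z0 : Fin r) (x y : M') :
    toCol z0 (x + y) = toCol (Z' := Z') z0 x + toCol z0 y :=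
  funext fun _ => Subtype.ext (smul_add _ _ _)

theorem toCol_smul (z0 : Fin r) (A : Matrix (Fin r) (Fin r) Z') (x : M') :
    toCol (Z' := Z') z0 (A • x) = A • toCol z0 x := by
  funext i
  apply Subtype.ext
  rw [col_smul_corner_coe, toCol_coe, ← mul_smul, stdBasis_mul_eq_sum,
    Finset.sum_smul]
  refine Finset.sum_congr rfl fun j _ => ?_
  rw [toCol_coe, ← mul_smul, Matrix.single_mul_single_same, mul_one]

theorem ofCol_toCol (z0 : Fin r) (x : M') : ofCol z0 (toCol (Z' := Z') z0 x) = x := by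
  rw [ofCol]
  simp only [toCol_coe, ← mul_smul, Matrix.single_mul_single_same, mul_one]
  rw [← Finset.sum_smul, sum_stdBasis_diag, one_smul]

theorem toCol_ofCol (z0 : Fin r) (v : Fin r → corner (Z' := Z') (M' := M') z0) :
    toCol z0 (ofCol z0 v) = v := by
  funext i
  apply Subtype.ext
  rw [toCol_coe, ofCol, Finset.smul_sum]
  simp only [← mul_smul]
  rw [Finset.sum_eq_single i]
  · rw [Matrix.single_mul_single_same, mul_one]
    exact (v i).2
  · intro j _ hj
    rw [Matrix.single_mul_single_of_ne (h := Ne.symm hj), zero_smul]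
  · simp

end ColumnSplit

/-- Every first order deformation, over `(M_r(Z'), h·1, M_r(π₀))`, of a column module
`M₀^r` over `M_r(Z)` is itself a column module: it is of the form `(M₀')^r` for a first
order `Z'`-deformation `M₀'` of `M₀`, compatibly with the identifications modulo `h`. -/
theorem column_module_deformation_splits {Z' : Type u} {Z : Type v} [Ring Z'] [Ring Z]
    (h : Z') (π₀ : Z' →+* Z) (hdef : IsFirstOrderDeformation h π₀)
    (r : ℕ) (hr : 1 ≤ r)
    (M₀ : Type w) [AddCommGroup M₀] [Module Z M₀]
    (M' : Type x) [AddCommGroup M'] [Module (Matrix (Fin r) (Fin r) Z') M']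
    (q : M' →+ (Fin r → M₀))
    (hq : IsModuleDeformation (h • (1 : Matrix (Fin r) (Fin r) Z'))
      (π₀.mapMatrix : Matrix (Fin r) (Fin r) Z' →+* Matrix (Fin r) (Fin r) Z) q) :
    ∃ (M₀' : Type x) (_ : AddCommGroup M₀') (_ : Module Z' M₀') (q₀ : M₀' →+ M₀),
      IsModuleDeformation h π₀ q₀ ∧
      ∃ e : M' ≃ₗ[Matrix (Fin r) (Fin r) Z'] (Fin r → M₀'),
        ∀ (x : M') (i : Fin r), q x i = q₀ (e x i) := by
  classical
  obtain ⟨hc, -, hker, hann⟩ := hdef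
  obtain ⟨qsurj, qequiv, qker, qann⟩ := hq
  set z0 : Fin r := ⟨0, hr⟩ with hz0
  have hπh : π₀ h = 0 := (hker h).mpr ⟨1, (mul_one h).symm⟩
  have hhh : h * h = 0 := (hann h).mpr ⟨1, (mul_one h).symm⟩
  -- key computation for q on standard-basis-matrix actions
  have hmap : ∀ (i j : Fin r) (c : Z'),
      π₀.mapMatrix (Matrix.single i j c) = Matrix.single i j (π₀ c) := by
    intro i j c
    ext a b
    simp [RingHom.mapMatrix_apply, Matrix.map_apply, Matrix.single, apply_ite π₀]
  have key : ∀ (i j : Fin r) (c : Z') (x : M') (k : Fin r),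
      q (Matrix.single i j c • x) k = if i = k then π₀ c • q x j else 0 := by
    intro i j c x k
    rw [qequiv, hmap, stdBasis_col_smul]
  -- `(h•1)` acts on corner elements as `stdBasisMatrix z0 z0 h`
  have hEh : ∀ v : M', (Matrix.single z0 z0 (1 : Z')) • v = v →
      (h • (1 : Matrix (Fin r) (Fin r) Z')) • v = Matrix.single z0 z0 h • v := by
    intro v hv
    conv_lhs => rw [← hv]
    rw [← mul_smul, ColumnSplit.hsmul_one_mul, Matrix.smul_single, smul_eq_mul, mul_one]
  -- from `↑v = (h•1) • y` produce a corner witness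
  have hmk : ∀ (v : ColumnSplit.corner (Z' := Z') (M' := M') z0) (y : M'),
      (v : M') = (h • (1 : Matrix (Fin r) (Fin r) Z')) • y →
      ∃ y' : ColumnSplit.corner (Z' := Z') (M' := M') z0, v = h • y' := by
    intro v y hy
    refine ⟨⟨Matrix.single z0 z0 (1 : Z') • y, by
      rw [ColumnSplit.mem_corner_iff, ← mul_smul, Matrix.single_mul_single_same, one_mul]⟩, ?_⟩
    apply Subtype.ext
    rw [ColumnSplit.corner_smul_coe]
    have hv2 : (Matrix.single z0 z0 (1 : Z')) • (v : M') = (v : M') := v.2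
    calc (v : M') = Matrix.single z0 z0 (1 : Z') • ((h • (1 : Matrix (Fin r) (Fin r) Z')) • y) := by
            rw [← hy, hv2]
      _ = (Matrix.single z0 z0 (1 : Z') * (h • (1 : Matrix (Fin r) (Fin r) Z'))) • y := by
            rw [mul_smul]
      _ = Matrix.single z0 z0 h • y := by
            rw [ColumnSplit.mul_hsmul_one h hc, Matrix.smul_single, smul_eq_mul, mul_one]
      _ = Matrix.single z0 z0 h • (Matrix.single z0 z0 (1 : Z') • y) := by
            rw [← mul_smul, Matrix.single_mul_single_same, mul_one]
  -- the deformation of M₀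
  refine ⟨ColumnSplit.corner (Z' := Z') (M' := M') z0, inferInstance, inferInstance,
    (Pi.evalAddMonoidHom (fun _ : Fin r => M₀) z0).comp
      (q.comp (ColumnSplit.corner (Z' := Z') (M' := M') z0).subtype), ?_, ?_⟩
  · refine ⟨?_, ?_, ?_, ?_⟩
    · -- surjectivity
      intro m
      obtain ⟨x, hx⟩ := qsurj (fun j => if j = z0 then m else 0)
      refine ⟨⟨Matrix.single z0 z0 (1 : Z') • x, by
        rw [ColumnSplit.mem_corner_iff, ← mul_smul, Matrix.single_mul_single_same, one_mul]⟩, ?_⟩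
      simp only [AddMonoidHom.comp_apply, AddSubgroup.coe_subtype, Pi.evalAddMonoidHom_apply]
      rw [key, if_pos rfl, hx]
      simp
    · -- equivariance
      intro a v
      simp only [AddMonoidHom.comp_apply, AddSubgroup.coe_subtype, Pi.evalAddMonoidHom_apply,
        ColumnSplit.corner_smul_coe]
      rw [key, if_pos rfl]
    · -- kernel
      intro v
      simp only [AddMonoidHom.comp_apply, AddSubgroup.coe_subtype, Pi.evalAddMonoidHom_apply]
      constructor
      · intro h0
        have hv2 : (Matrix.single z0 z0 (1 : Z')) • (v : M') = (v : M') := v.2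
        have hq0 : q (v : M') = 0 := by
          funext j
          have := key z0 z0 (1 : Z') (v : M') j
          rw [hv2] at this
          rw [this]
          rcases eq_or_ne z0 j with rfl | hj
          · rw [if_pos rfl, h0, smul_zero]; rfl
          · rw [if_neg hj]; rfl
        obtain ⟨y, hy⟩ := (qker (v : M')).mp hq0
        exact hmk v y hy
      · rintro ⟨y', rfl⟩
        rw [ColumnSplit.corner_smul_coe, key, if_pos rfl, hπh, zero_smul]
    · -- annihilator
      intro v
      constructor
      · intro h0
        have hv2 : (Matrix.single z0 z0 (1 : Z')) • (v : M') = (v : M') := v.2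
        have h1 : (h • (1 : Matrix (Fin r) (Fin r) Z')) • (v : M') = 0 := by
          rw [hEh _ hv2]
          have := congrArg (Subtype.val) h0
          rwa [ColumnSplit.corner_smul_coe] at this
        obtain ⟨y, hy⟩ := (qann (v : M')).mp h1
        exact hmk v y hy
      · rintro ⟨y', rfl⟩
        apply Subtype.ext
        rw [ColumnSplit.corner_smul_coe, ColumnSplit.corner_smul_coe, ← mul_smul,
          Matrix.single_mul_single_same, hhh, Matrix.single_zero, zero_smul]
        rfl
  · -- the linear equivalence
    refine ⟨{ toFun := ColumnSplit.toCol z0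
              map_add' := ColumnSplit.toCol_add z0
              map_smul' := ColumnSplit.toCol_smul z0
              invFun := ColumnSplit.ofCol z0
              left_inv := ColumnSplit.ofCol_toCol z0
              right_inv := ColumnSplit.toCol_ofCol z0 }, ?_⟩
    intro x i
    simp only [AddMonoidHom.comp_apply, AddSubgroup.coe_subtype, Pi.evalAddMonoidHom_apply]
    show q x i = q ((ColumnSplit.toCol z0 x i : ColumnSplit.corner (Z' := Z') (M' := M') z0) : M') z0
    rw [ColumnSplit.toCol_coe, key, if_pos rfl, map_one, one_smul]
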